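/- Let g(x) = a(x+1)^{l_1} + b x^{k_2}(x+1)^{l_2} + x^{k_3} with a < 0, b > 0, 0 < k_3 < k_2, l_2 ≥ 0, l_1 > k_2 + l_2, l_1 > k_3. If g has four roots in (0,∞), two roots in (-∞,-1) and three roots in (-1,0) (all counted with multiplicity, and these nine are all its real roots), then l_1 is odd, k_2 is odd, k_3 is even and l_2 is even. -/

import Mathlib

open Polynomial

/-- Number of sign changes in the coefficient sequence, disregarding zeros. -/
noncomputable def signVar (p : Polynomial ℝ) : ℕ :=
  let l := (((List.range (p.natDegree + 1)).map fun i => p.coeff i).filter fun a => a ≠ 0)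
  (l.zip l.tail).countP fun q => q.1 * q.2 < 0

/-- Substitution y = x + 1 into a bivariate polynomial. -/
noncomputable def subXX1 (f : MvPolynomial (Fin 2) ℝ) : Polynomial ℝ :=
  MvPolynomial.aeval ![Polynomial.X, Polynomial.X + 1] f

/-- `T3 d h = (x+1)^d * h(-x/(x+1))` as a polynomial. -/
noncomputable def T3 (d : ℕ) (h : Polynomial ℝ) : Polynomial ℝ :=
  ∑ i ∈ Finset.range (d + 1),
    Polynomial.C (h.coeff i) * (-Polynomial.X) ^ i * (Polynomial.X + 1) ^ (d - i)

noncomputable def VI1 (h : Polynomial ℝ) : ℕ := signVar h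
noncomputable def VI2 (h : Polynomial ℝ) : ℕ := signVar (h.comp (-1 - Polynomial.X))
noncomputable def VI3 (h : Polynomial ℝ) : ℕ := signVar (T3 h.natDegree h)

open Filter

section Aux

lemma msign (s : Multiset ℝ) (h : ∀ x ∈ s, x < 0) :
    (Even (Multiset.card s) → 0 < s.prod) ∧ (Odd (Multiset.card s) → s.prod < 0) := by
  induction s using Multiset.induction with
  | empty => simp
  | cons a t ih =>
    have ha : a < 0 := h a (Multiset.mem_cons_self a t)
    have ht := ih (fun x hx => h x (Multiset.mem_cons_of_mem hx))
    simp only [Multiset.prod_cons, Multiset.card_cons]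
    constructor
    · intro he
      have hodd : Odd (Multiset.card t) := by
        rw [Nat.even_add_one] at he; exact Nat.not_even_iff_odd.1 he
      exact mul_pos_of_neg_of_neg ha (ht.2 hodd)
    · intro ho
      have he : Even (Multiset.card t) := by
        rw [Nat.odd_add_one, Nat.not_odd_iff_even] at ho; exact ho
      exact mul_neg_of_neg_of_pos ha (ht.1 he)

lemma mpos (s : Multiset ℝ) (h : ∀ x ∈ s, 0 < x) : 0 < s.prod := by
  induction s using Multiset.induction with
  | empty => simp
  | cons a t ih =>
    simp only [Multiset.prod_cons]
    exact mul_pos (h a (Multiset.mem_cons_self a t))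
      (ih fun x hx => h x (Multiset.mem_cons_of_mem hx))

lemma filter_of_filter {α : Type*} (s : Multiset α) (p q : α → Prop) [DecidablePred p]
    [DecidablePred q] (h : ∀ x, q x → p x) :
    (s.filter p).filter q = s.filter q := by
  rw [Multiset.filter_filter]
  exact Multiset.filter_congr fun x _ => by constructor <;> intro hx <;> [exact hx.1; exact ⟨hx, h x hx⟩]

lemma trich (g : Polynomial ℝ)
    (h₁ : (g.roots.filter fun x => 0 < x).card = 4)
    (h₂ : (g.roots.filter fun x => x < -1).card = 2)
    (h₃ : (g.roots.filter fun x => -1 < x ∧ x < 0).card = 3)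
    (hall : Multiset.card g.roots = 9) :
    ∀ r ∈ g.roots, 0 < r ∨ r < -1 ∨ (-1 < r ∧ r < 0) := by
  have hct : (g.roots.filter (fun x => ¬ 0 < x)).card = 5 := by
    have hc := congrArg Multiset.card (Multiset.filter_add_not (fun x => 0 < x) g.roots)
    rw [Multiset.card_add, h₁, hall] at hc
    omega
  have hq_t : ((g.roots.filter (fun x => ¬ 0 < x)).filter (fun x => x < -1))
      = g.roots.filter (fun x => x < -1) :=
    filter_of_filter _ _ _ (fun x hx => by intro h; linarith)
  have hr_t : ((g.roots.filter (fun x => ¬ 0 < x)).filter (fun x => -1 < x ∧ x < 0))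
      = g.roots.filter (fun x => -1 < x ∧ x < 0) :=
    filter_of_filter _ _ _ (fun x hx => by intro h; linarith [hx.2])
  have hcu : (((g.roots.filter (fun x => ¬ 0 < x)).filter (fun x => ¬ x < -1))).card = 3 := by
    have hc := congrArg Multiset.card
      (Multiset.filter_add_not (fun x => x < -1) (g.roots.filter (fun x => ¬ 0 < x)))
    rw [Multiset.card_add, hq_t, h₂, hct] at hc
    omega
  have hr_u : (((g.roots.filter (fun x => ¬ 0 < x)).filter (fun x => ¬ x < -1)).filter
        (fun x => -1 < x ∧ x < 0))
      = (g.roots.filter (fun x => ¬ 0 < x)).filter (fun x => -1 < x ∧ x < 0) :=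
    filter_of_filter _ _ _ (fun x hx => by intro h; linarith [hx.1])
  have hueq : (((g.roots.filter (fun x => ¬ 0 < x)).filter (fun x => ¬ x < -1)).filter
        (fun x => -1 < x ∧ x < 0))
      = ((g.roots.filter (fun x => ¬ 0 < x)).filter (fun x => ¬ x < -1)) := by
    apply Multiset.eq_of_le_of_card_le (Multiset.filter_le _ _)
    rw [hcu, hr_u, hr_t, h₃]
  intro r hr
  by_cases hp : 0 < r
  · exact Or.inl hp
  have hrt : r ∈ g.roots.filter (fun x => ¬ 0 < x) := Multiset.mem_filter.2 ⟨hr, hp⟩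
  by_cases hq2 : r < -1
  · exact Or.inr (Or.inl hq2)
  have hru : r ∈ (g.roots.filter (fun x => ¬ 0 < x)).filter (fun x => ¬ x < -1) :=
    Multiset.mem_filter.2 ⟨hrt, hq2⟩
  rw [← hueq] at hru
  exact Or.inr (Or.inr (Multiset.mem_filter.1 hru).2)

lemma poly_neg (q : Polynomial ℝ) (h : ∀ t, eval t q ≠ 0) (h0 : eval 0 q < 0) :
    ∀ t, eval t q < 0 := by
  intro t
  by_contra hge
  push_neg at hge
  have hpos : 0 < eval t q := lt_of_le_of_ne hge (Ne.symm (h t))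
  have hcont : Continuous fun x : ℝ => eval x q := q.continuous
  rcases le_or_gt t 0 with hc | hc
  · obtain ⟨c, _, hc0⟩ := intermediate_value_Icc' hc hcont.continuousOn
      (Set.mem_Icc.2 ⟨h0.le, hpos.le⟩)
    exact h c hc0
  · obtain ⟨c, _, hc0⟩ := intermediate_value_Icc hc.le hcont.continuousOn
      (Set.mem_Icc.2 ⟨h0.le, hpos.le⟩)
    exact h c hc0

end Aux

set_option maxHeartbeats 2000000 in
theorem stmt17 (a b : ℝ) (ha : a < 0) (hb : 0 < b) (k₂ k₃ l₁ l₂ : ℕ)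
    (hk₃ : 0 < k₃) (hk₂ : k₃ < k₂) (hl₁ : k₂ + l₂ < l₁) (hl₁' : k₃ < l₁)
    (g : Polynomial ℝ)
    (hgdef : g = Polynomial.C a * (Polynomial.X + 1) ^ l₁ +
        Polynomial.C b * Polynomial.X ^ k₂ * (Polynomial.X + 1) ^ l₂ +
        Polynomial.X ^ k₃)
    (h₁ : (g.roots.filter fun x => 0 < x).card = 4)
    (h₂ : (g.roots.filter fun x => x < -1).card = 2)
    (h₃ : (g.roots.filter fun x => -1 < x ∧ x < 0).card = 3)
    (hall : Multiset.card g.roots = 9) :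
    Odd l₁ ∧ Odd k₂ ∧ Even k₃ ∧ Even l₂ := by
  have ha0 : a ≠ 0 := ne_of_lt ha
  have hXp1 : (X + 1 : ℝ[X]) = X + C 1 := by simp
  have hnd2 : (C b * X ^ k₂ * (X + 1) ^ l₂ : ℝ[X]).natDegree ≤ k₂ + l₂ := by
    calc (C b * X ^ k₂ * (X + 1) ^ l₂ : ℝ[X]).natDegree
        ≤ (C b * X ^ k₂ : ℝ[X]).natDegree + ((X + 1 : ℝ[X]) ^ l₂).natDegree := natDegree_mul_le
      _ ≤ k₂ + l₂ := by
          gcongr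
          · exact le_trans (natDegree_C_mul_le b (X ^ k₂)) (by simp)
          · calc ((X + 1 : ℝ[X]) ^ l₂).natDegree ≤ l₂ * (X + 1 : ℝ[X]).natDegree :=
                natDegree_pow_le
            _ ≤ l₂ := by rw [hXp1, natDegree_X_add_C]; omega
  have hnd1 : (C a * (X + 1) ^ l₁ : ℝ[X]).natDegree ≤ l₁ := by
    calc (C a * (X + 1) ^ l₁ : ℝ[X]).natDegree ≤ ((X+1:ℝ[X]) ^ l₁).natDegree :=
        natDegree_C_mul_le _ _
      _ ≤ l₁ * (X + 1 : ℝ[X]).natDegree := natDegree_pow_le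
      _ ≤ l₁ := by rw [hXp1, natDegree_X_add_C]; omega
  have hcoeff : g.coeff l₁ = a := by
    rw [hgdef]
    rw [coeff_add, coeff_add]
    have h2 : (C b * X ^ k₂ * (X + 1) ^ l₂ : ℝ[X]).coeff l₁ = 0 :=
      coeff_eq_zero_of_natDegree_lt (lt_of_le_of_lt hnd2 hl₁)
    have h3 : (X ^ k₃ : ℝ[X]).coeff l₁ = 0 := by
      rw [coeff_X_pow]; simp [Nat.ne_of_gt hl₁']
    rw [h2, h3, coeff_C_mul, coeff_X_add_one_pow]
    simp
  have hdegle : g.natDegree ≤ l₁ := by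
    rw [hgdef]
    refine le_trans (natDegree_add_le _ _) ?_
    simp only [max_le_iff]
    refine ⟨le_trans (natDegree_add_le _ _) ?_, by simpa using hl₁'.le⟩
    exact max_le hnd1 (le_trans hnd2 hl₁.le)
  have hdeg : g.natDegree = l₁ :=
    le_antisymm hdegle (le_natDegree_of_ne_zero (hcoeff ▸ ha0))
  have hg0 : g ≠ 0 := fun h => ha0 (by rw [h] at hcoeff; simpa using hcoeff.symm)
  have hlead : g.leadingCoeff = a := by rw [leadingCoeff, hdeg, hcoeff]
  -- factorization g = (∏ (X - r)) * q with q without real roots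
  obtain ⟨q, hq⟩ := prod_multiset_X_sub_C_dvd g
  have hq0 : q ≠ 0 := by rintro rfl; rw [mul_zero] at hq; exact hg0 hq
  have hrootsq : q.roots = 0 := by
    have hmul : ((g.roots.map fun r => X - C r).prod * q).roots
        = ((g.roots.map fun r => X - C r).prod).roots + q.roots :=
      roots_mul (hq ▸ hg0)
    rw [roots_multiset_prod_X_sub_C] at hmul
    have hcard := congrArg Multiset.card hmul
    rw [← hq, Multiset.card_add] at hcard
    exact Multiset.card_eq_zero.1 (by omega)
  have hqne : ∀ t : ℝ, eval t q ≠ 0 := by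
    intro t h
    have : t ∈ q.roots := by rw [mem_roots hq0]; exact h
    rw [hrootsq] at this; simp at this
  have heval : ∀ t : ℝ, eval t g = (g.roots.map fun r => t - r).prod * eval t q := by
    intro t
    conv_lhs => rw [hq]
    rw [eval_mul, eval_multiset_prod, Multiset.map_map]
    simp [Function.comp]
  have htri := trich g h₁ h₂ h₃ hall
  -- sign of q
  have hqneg : ∀ t : ℝ, eval t q < 0 := by
    apply poly_neg q hqne
    have hg0v : eval 0 g = a := by
      rw [hgdef]; simp [zero_pow (by omega : l₁ ≠ 0), zero_pow (by omega : k₂ ≠ 0),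
        zero_pow (by omega : k₃ ≠ 0)]
    have hprodpos : 0 < ((g.roots.map fun r => (0:ℝ) - r)).prod := by
      have hsplit : (g.roots.map fun r => (0:ℝ) - r)
          = ((g.roots.filter (fun x => 0 < x)).map fun r => (0:ℝ) - r)
            + ((g.roots.filter (fun x => ¬ 0 < x)).map fun r => (0:ℝ) - r) := by
        rw [← Multiset.map_add, Multiset.filter_add_not]
      rw [hsplit, Multiset.prod_add]
      have hpos1 : 0 < (((g.roots.filter (fun x => 0 < x)).map fun r => (0:ℝ) - r)).prod := by
        refine (msign _ ?_).1 ?_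
        · intro x hx
          obtain ⟨r, hr, rfl⟩ := Multiset.mem_map.1 hx
          have := (Multiset.mem_filter.1 hr).2
          linarith
        · rw [Multiset.card_map, h₁]; decide
      have hpos2 : 0 < (((g.roots.filter (fun x => ¬ 0 < x)).map fun r => (0:ℝ) - r)).prod := by
        refine mpos _ ?_
        intro x hx
        obtain ⟨r, hr, rfl⟩ := Multiset.mem_map.1 hx
        obtain ⟨hrr, hnp⟩ := Multiset.mem_filter.1 hr
        rcases htri r hrr with h | h | h
        · exact absurd h hnp
        · linarith
        · linarith [h.2]
      exact mul_pos hpos1 hpos2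
    have := heval 0
    rw [hg0v] at this
    nlinarith [this, hprodpos]
  -- l₁ is odd
  have hl1odd : Odd l₁ := by
    by_contra hodd
    rw [Nat.not_odd_iff_even] at hodd
    have hdX : (-X : ℝ[X]).natDegree = 1 := by simp
    have hcomp_lead : (g.comp (-X)).leadingCoeff = a := by
      rw [leadingCoeff_comp (by rw [hdX]; norm_num), hlead, hdeg]
      have hX1 : (-X : ℝ[X]).leadingCoeff = -1 := by simp
      rw [hX1, hodd.neg_one_pow, mul_one]
    have hcne : g.comp (-X) ≠ 0 := leadingCoeff_ne_zero.1 (by rw [hcomp_lead]; exact ha0)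
    have hcomp_deg : (g.comp (-X)).natDegree = l₁ := by
      rw [natDegree_comp, hdX, hdeg, mul_one]
    have hdegpos : 0 < (g.comp (-X)).degree := by
      rw [← natDegree_pos_iff_degree_pos, hcomp_deg]
      omega
    have htend := tendsto_atBot_of_leadingCoeff_nonpos (g.comp (-X)) hdegpos
      (by rw [hcomp_lead]; exact ha.le)
    obtain ⟨T, hT⟩ := eventually_atTop.1 (htend.eventually_lt_atBot 0)
    have hex : ∃ r, r ∈ g.roots := by
      rw [← Multiset.card_pos_iff_exists_mem, hall]; norm_num
    obtain ⟨r0, hr0⟩ := hex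
    have hnem : g.roots.toFinset.Nonempty := ⟨r0, Multiset.mem_toFinset.2 hr0⟩
    set m := g.roots.toFinset.min' hnem with hm
    have hmle : ∀ r ∈ g.roots, m ≤ r := fun r hr =>
      Finset.min'_le _ r (Multiset.mem_toFinset.2 hr)
    set x0 := max T (1 - m) with hx0
    have h1 : eval x0 (g.comp (-X)) < 0 := hT x0 (le_max_left _ _)
    rw [eval_comp] at h1
    simp only [eval_neg, eval_X] at h1
    have h2 : 0 < eval (-x0) g := by
      rw [heval]
      have hprodneg : ((g.roots.map fun r => -x0 - r)).prod < 0 := by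
        refine (msign _ ?_).2 ?_
        · intro x hx
          obtain ⟨r, hr, rfl⟩ := Multiset.mem_map.1 hx
          have h3 := hmle r hr
          have h4 : (1 - m) ≤ x0 := le_max_right _ _
          linarith
        · rw [Multiset.card_map, hall]; decide
      exact mul_pos_of_neg_of_neg hprodneg (hqneg _)
    linarith
  -- g(-1) > 0
  have hgm1 : 0 < eval (-1) g := by
    rw [heval]
    have hsplit : (g.roots.map fun r => (-1:ℝ) - r)
        = ((g.roots.filter (fun x => x < -1)).map fun r => (-1:ℝ) - r)
          + ((g.roots.filter (fun x => ¬ x < -1)).map fun r => (-1:ℝ) - r) := by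
      rw [← Multiset.map_add, Multiset.filter_add_not]
    have hcard7 : ((g.roots.filter (fun x => ¬ x < -1))).card = 7 := by
      have hc := congrArg Multiset.card (Multiset.filter_add_not (fun x => x < -1) g.roots)
      rw [Multiset.card_add, h₂, hall] at hc
      omega
    have hpos1 : 0 < (((g.roots.filter (fun x => x < -1)).map fun r => (-1:ℝ) - r)).prod := by
      refine mpos _ ?_
      intro x hx
      obtain ⟨r, hr, rfl⟩ := Multiset.mem_map.1 hx
      have := (Multiset.mem_filter.1 hr).2
      linarith
    have hneg2 : (((g.roots.filter (fun x => ¬ x < -1)).map fun r => (-1:ℝ) - r)).prod < 0 := by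
      refine (msign _ ?_).2 ?_
      · intro x hx
        obtain ⟨r, hr, rfl⟩ := Multiset.mem_map.1 hx
        obtain ⟨hrr, hnp⟩ := Multiset.mem_filter.1 hr
        rcases htri r hrr with h | h | h
        · linarith
        · exact absurd h hnp
        · linarith [h.1]
      · rw [Multiset.card_map, hcard7]; decide
    have : ((g.roots.map fun r => (-1:ℝ) - r)).prod < 0 := by
      rw [hsplit, Multiset.prod_add]
      exact mul_neg_of_pos_of_neg hpos1 hneg2
    exact mul_pos_of_neg_of_neg this (hqneg _)
  -- k₃ is even
  have hk3even : Even k₃ := by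
    by_contra hk3o
    rw [Nat.not_even_iff_odd] at hk3o
    have hev : eval (-1:ℝ) g = b * (-1)^k₂ * 0^l₂ + (-1)^k₃ := by
      rw [hgdef]
      simp [zero_pow (by omega : l₁ ≠ 0)]
    rcases Nat.eq_zero_or_pos l₂ with hl2 | hl2
    · -- l₂ > 0 case handled below; this is l₂ = 0
      rw [hl2] at hev
      simp only [pow_zero, mul_one, hk3o.neg_one_pow] at hev
      -- g(-1) = b * (-1)^k₂ - 1 > 0, so k₂ even and b > 1
      have hb1 : b * (-1:ℝ)^k₂ > 1 := by rw [hev] at hgm1; linarith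
      have hk2even : Even k₂ := by
        by_contra hk2o
        rw [Nat.not_even_iff_odd] at hk2o
        rw [hk2o.neg_one_pow] at hb1
        linarith
      rw [hk2even.neg_one_pow, mul_one] at hb1
      -- g is positive on (-∞, -1)
      have key : ∀ x : ℝ, x < -1 → 0 < eval x g := by
        intro x hx
        have hev2 : eval x g = a * (x+1)^l₁ + b * x^k₂ + x^k₃ := by
          rw [hgdef, hl2]; simp
        have ht1 : 0 < a * (x+1)^l₁ :=
          mul_pos_of_neg_of_neg ha (hl1odd.pow_neg (by linarith))
        have hu : (1:ℝ) < -x := by linarith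
        have hxk2 : x^k₂ = (-x)^k₂ := (hk2even.neg_pow x).symm
        have hxk3 : x^k₃ = -((-x)^k₃) := by
          have := hk3o.neg_pow (-x)
          rw [neg_neg] at this
          rw [this]
        have hpow : (-x)^k₃ < (-x)^k₂ := pow_lt_pow_right₀ hu hk₂
        have hk2pos : (0:ℝ) < (-x)^k₂ := pow_pos (by linarith) _
        rw [hev2, hxk2, hxk3]
        nlinarith
      obtain ⟨x, hx⟩ : ∃ x, x ∈ g.roots.filter (fun x => x < -1) := by
        rw [← Multiset.card_pos_iff_exists_mem, h₂]; norm_num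
      obtain ⟨hxr, hxlt⟩ := Multiset.mem_filter.1 hx
      have := key x hxlt
      rw [(mem_roots hg0).1 hxr] at this
      linarith
    · rw [zero_pow (by omega : l₂ ≠ 0)] at hev
      rw [hev] at hgm1
      rw [hk3o.neg_one_pow] at hgm1
      linarith
  -- k₂ + l₂ is odd
  have hk2l2 : Odd (k₂ + l₂) := by
    by_contra hpar
    rw [Nat.not_odd_iff_even] at hpar
    have key : ∀ x : ℝ, x < -1 → 0 < eval x g := by
      intro x hx
      have hev2 : eval x g = a * (x+1)^l₁ + b * (x^k₂ * (x+1)^l₂) + x^k₃ := by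
        rw [hgdef]; simp; ring
      have ht1 : 0 < a * (x+1)^l₁ :=
        mul_pos_of_neg_of_neg ha (hl1odd.pow_neg (by linarith))
      have ht3 : 0 < x^k₃ := hk3even.pow_pos (by intro h; rw [h] at hx; linarith)
      have ht2 : 0 < x^k₂ * (x+1)^l₂ := by
        rcases Nat.even_add.1 hpar with hiff
        by_cases hk2e : Even k₂
        · have hl2e : Even l₂ := hiff.1 hk2e
          exact mul_pos (hk2e.pow_pos (by intro h; rw [h] at hx; linarith))
            (hl2e.pow_pos (by intro h; nlinarith [h]))
        · have hk2o := Nat.not_even_iff_odd.1 hk2e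
          have hl2o : Odd l₂ := by
            rcases Nat.even_or_odd l₂ with h | h
            · exact absurd (hiff.2 h) hk2e
            · exact h
          exact mul_pos_of_neg_of_neg (hk2o.pow_neg (by linarith))
            (hl2o.pow_neg (by linarith))
      have : 0 < a * (x+1)^l₁ + b * (x^k₂ * (x+1)^l₂) + x^k₃ := by nlinarith
      rw [hev2]; exact this
    obtain ⟨x, hx⟩ : ∃ x, x ∈ g.roots.filter (fun x => x < -1) := by
      rw [← Multiset.card_pos_iff_exists_mem, h₂]; norm_num
    obtain ⟨hxr, hxlt⟩ := Multiset.mem_filter.1 hx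
    have := key x hxlt
    rw [(mem_roots hg0).1 hxr] at this
    linarith
  -- k₂ is odd
  have hk2odd : Odd k₂ := by
    by_contra hk2e
    rw [Nat.not_odd_iff_even] at hk2e
    obtain ⟨m1, hm1⟩ : ∃ m, l₁ = k₂ + l₂ + (m+1) := ⟨l₁ - (k₂+l₂) - 1, by omega⟩
    obtain ⟨m2, hm2⟩ : ∃ m, l₁ = k₃ + (m+1) := ⟨l₁ - k₃ - 1, by omega⟩
    obtain ⟨K2, hK2⟩ : ∃ m, k₂ = m + 1 := ⟨k₂ - 1, by omega⟩
    obtain ⟨K3, hK3⟩ : ∃ m, k₃ = m + 1 := ⟨k₃ - 1, by omega⟩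
    -- the transformed function and its derivative
    set p1 : ℝ → ℝ := fun t => a + b * (t^k₂ * (1+t)^(m1+1)) + t^k₃ * (1+t)^(m2+1) with hp1
    set d1 : ℝ → ℝ := fun t => b * ((k₂*t^(k₂-1)) * (1+t)^(m1+1) + t^k₂ * ((m1+1)*(1+t)^m1))
        + ((k₃*t^(k₃-1)) * (1+t)^(m2+1) + t^k₃ * ((m2+1)*(1+t)^m2)) with hd1def
    have hd1 : ∀ t : ℝ, HasDerivAt p1 (d1 t) t := by
      intro t
      have h2 : HasDerivAt (fun s : ℝ => s ^ k₂) ((k₂:ℝ) * t^(k₂-1)) t := hasDerivAt_pow k₂ t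
      have h2' : HasDerivAt (fun s : ℝ => (1+s)^(m1+1)) (((m1:ℝ)+1) * (1+t)^m1) t := by
        have := ((hasDerivAt_id t).const_add (1:ℝ)).fun_pow (m1+1)
        simpa using this
      have h3 : HasDerivAt (fun s : ℝ => s ^ k₃) ((k₃:ℝ) * t^(k₃-1)) t := hasDerivAt_pow k₃ t
      have h3' : HasDerivAt (fun s : ℝ => (1+s)^(m2+1)) (((m2:ℝ)+1) * (1+t)^m2) t := by
        have := ((hasDerivAt_id t).const_add (1:ℝ)).fun_pow (m2+1)
        simpa using this
      have := (((h2.fun_mul h2').const_mul b).const_add a).fun_add (h3.fun_mul h3')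
      convert this using 1
    have hDpos : ∀ t : ℝ, 0 < t → 0 < d1 t * t - p1 t := by
      intro t ht
      have heq : d1 t * t - p1 t = -a + b * (t^k₂ * (1+t)^m1 * (K2*(1+t) + (m1+1)*t))
          + t^k₃ * (1+t)^m2 * (K3*(1+t) + (m2+1)*t) := by
        simp only [hd1def, hp1, hK2, hK3]
        push_cast
        ring_nf
      rw [heq]
      have h1t : (0:ℝ) < 1 + t := by linarith
      have e1 : 0 ≤ b * (t^k₂ * (1+t)^m1 * (K2*(1+t) + (m1+1)*t)) := by positivity
      have e2 : 0 ≤ t^k₃ * (1+t)^m2 * (K3*(1+t) + (m2+1)*t) := by positivity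
      linarith
    -- the Möbius substitution y = -x/(x+1)
    set y : ℝ → ℝ := fun x => -x / (x+1) with hy
    have hyd : ∀ x : ℝ, x ≠ -1 →
        HasDerivAt y ((-1 * (x+1) - (-x) * 1)/(x+1)^2) x := by
      intro x hx
      have hne : x + 1 ≠ 0 := by intro h; apply hx; linarith
      exact ((hasDerivAt_id x).neg.div ((hasDerivAt_id x).add_const 1) hne)
    have hydneg : ∀ x : ℝ, -1 < x → ((-1 * (x+1) - (-x) * 1)/(x+1)^2) < 0 := by
      intro x hx
      have h1 : (-1 * (x+1) - (-x) * 1) = -1 := by ring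
      rw [h1]
      have h2 : (0:ℝ) < x + 1 := by linarith
      apply div_neg_of_neg_of_pos (by norm_num)
      positivity
    have hypos : ∀ x ∈ Set.Ioo (-1:ℝ) 0, 0 < y x := by
      rintro x ⟨hx1, hx2⟩
      apply div_pos (by linarith)
      linarith
    -- F = p1(t)/t
    set F : ℝ → ℝ := fun t => p1 t / t with hF
    have hFd : ∀ t : ℝ, 0 < t → HasDerivAt F ((d1 t * t - p1 t * 1)/t^2) t := by
      intro t ht
      exact (hd1 t).div (hasDerivAt_id t) (ne_of_gt ht)
    -- φ = F ∘ y and its derivative on Ioo (-1) 0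
    have hphi : ∀ x ∈ Set.Ioo (-1:ℝ) 0,
        HasDerivAt (fun s => F (y s))
          ((d1 (y x) * (y x) - p1 (y x) * 1)/(y x)^2 * ((-1 * (x+1) - (-x) * 1)/(x+1)^2)) x := by
      intro x hx
      exact (hFd (y x) (hypos x hx)).comp x (hyd x (ne_of_gt hx.1))
    have hphineg : ∀ x ∈ Set.Ioo (-1:ℝ) 0,
        ((d1 (y x) * (y x) - p1 (y x) * 1)/(y x)^2 * ((-1 * (x+1) - (-x) * 1)/(x+1)^2)) < 0 := by
      intro x hx
      apply mul_neg_of_pos_of_neg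
      · apply div_pos
        · rw [mul_one]; exact hDpos (y x) (hypos x hx)
        · have := hypos x hx; positivity
      · exact hydneg x hx.1
    -- the key identity
    have hkey : ∀ x ∈ Set.Ioo (-1:ℝ) 0, eval x g = (x+1)^l₁ * p1 (y x) := by
      rintro x ⟨hx1, hx2⟩
      have hx1' : (0:ℝ) < x + 1 := by linarith
      have hx1ne : x + 1 ≠ 0 := ne_of_gt hx1'
      have hxne : x ≠ 0 := ne_of_lt hx2
      have h1y : 1 + y x = 1/(x+1) := by
        simp only [hy]
        field_simp
        ring
      have e1 : (y x)^k₂ = x^k₂ / (x+1)^k₂ := by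
        simp only [hy, div_pow]
        rw [hk2e.neg_pow]
      have e3 : (y x)^k₃ = x^k₃ / (x+1)^k₃ := by
        simp only [hy, div_pow]
        rw [hk3even.neg_pow]
      have T2 : (x+1)^l₁ * (b * ((y x)^k₂ * (1 + y x)^(m1+1))) = b * x^k₂ * (x+1)^l₂ := by
        rw [e1, h1y, div_pow, one_pow, hm1, pow_add, pow_add]
        field_simp
      have T3 : (x+1)^l₁ * ((y x)^k₃ * (1 + y x)^(m2+1)) = x^k₃ := by
        rw [e3, h1y, div_pow, one_pow, hm2, pow_add]
        field_simp
      have hexp : (x+1)^l₁ * p1 (y x)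
          = a * (x+1)^l₁ + (x+1)^l₁ * (b * ((y x)^k₂ * (1 + y x)^(m1+1)))
            + (x+1)^l₁ * ((y x)^k₃ * (1 + y x)^(m2+1)) := by
        simp only [hp1]
        ring
      rw [hexp, T2, T3, hgdef]
      simp
    -- roots of g in Ioo (-1) 0 are zeros of φ
    have hzero : ∀ x ∈ Set.Ioo (-1:ℝ) 0, eval x g = 0 → F (y x) = 0 := by
      intro x hx hev
      have hx1ne : (x+1:ℝ) ≠ 0 := ne_of_gt (by linarith [hx.1])
      have hp10 : p1 (y x) = 0 := by
        have := hkey x hx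
        rw [hev] at this
        have hpow : (x+1:ℝ)^l₁ ≠ 0 := pow_ne_zero _ hx1ne
        rcases mul_eq_zero.1 this.symm with h | h
        · exact absurd h hpow
        · exact h
      simp only [hF, hp10, zero_div]
    -- φ is strictly antitone on Ioo (-1) 0
    have hanti : StrictAntiOn (fun s => F (y s)) (Set.Ioo (-1:ℝ) 0) := by
      apply strictAntiOn_of_deriv_neg (convex_Ioo _ _)
      · intro x hx
        exact ((hphi x hx).continuousAt).continuousWithinAt
      · intro x hx
        rw [interior_Ioo] at hx
        rw [(hphi x hx).deriv]
        exact hphineg x hx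
    -- extract roots
    have hmem : ∀ r ∈ g.roots.filter (fun x => -1 < x ∧ x < 0), r ∈ Set.Ioo (-1:ℝ) 0 ∧ eval r g = 0 := by
      intro r hr
      obtain ⟨hrr, hrp⟩ := Multiset.mem_filter.1 hr
      exact ⟨Set.mem_Ioo.2 hrp, (mem_roots hg0).1 hrr⟩
    by_cases hdist : ∃ r1 ∈ g.roots.filter (fun x => -1 < x ∧ x < 0),
        ∃ r2 ∈ g.roots.filter (fun x => -1 < x ∧ x < 0), r1 ≠ r2
    · obtain ⟨r1, hr1, r2, hr2, hne⟩ := hdist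
      obtain ⟨hI1, he1⟩ := hmem r1 hr1
      obtain ⟨hI2, he2⟩ := hmem r2 hr2
      have hz1 : F (y r1) = 0 := hzero r1 hI1 he1
      have hz2 : F (y r2) = 0 := hzero r2 hI2 he2
      rcases hne.lt_or_gt with h | h
      · have h5 := hanti hI1 hI2 h
        simp only [hz1, hz2] at h5
        exact lt_irrefl 0 h5
      · have h5 := hanti hI2 hI1 h
        simp only [hz1, hz2] at h5
        exact lt_irrefl 0 h5
    · push_neg at hdist
      obtain ⟨r, hr⟩ : ∃ r, r ∈ g.roots.filter (fun x => -1 < x ∧ x < 0) := by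
        rw [← Multiset.card_pos_iff_exists_mem, h₃]; norm_num
      -- all elements are equal to r, so r has multiplicity ≥ 2
      have hrep : g.roots.filter (fun x => -1 < x ∧ x < 0) = Multiset.replicate 3 r := by
        rw [Multiset.eq_replicate]
        exact ⟨h₃, fun b hb => (hdist b hb r hr)⟩
      have hcount : 2 ≤ Multiset.count r g.roots := by
        have h1 : Multiset.count r (g.roots.filter (fun x => -1 < x ∧ x < 0)) = 3 := by
          rw [hrep, Multiset.count_replicate_self]
        have h2 := Multiset.count_le_of_le r (Multiset.filter_le (fun x => -1 < x ∧ x < 0) g.roots)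
        omega
      rw [count_roots] at hcount
      have hdvd : (X - C r)^2 ∣ g := dvd_trans (pow_dvd_pow _ hcount) (pow_rootMultiplicity_dvd g r)
      obtain ⟨h, hgh⟩ := hdvd
      have hg' : eval r (derivative g) = 0 := by
        rw [hgh, derivative_mul, derivative_pow]
        simp
      obtain ⟨hrI, hre⟩ := hmem r hr
      -- w = ((x+1)^l₁ * y x)⁻¹
      set v : ℝ → ℝ := fun x => (x+1)^l₁ * y x with hv
      have hvd : HasDerivAt v (((l₁:ℝ) * (r+1)^(l₁-1) * 1) * y r
          + (r+1)^l₁ * ((-1 * (r+1) - (-r) * 1)/(r+1)^2)) r := by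
        have hbase : HasDerivAt (fun x : ℝ => (x+1)^l₁) ((l₁:ℝ) * (r+1)^(l₁-1) * 1) r :=
          ((hasDerivAt_id r).add_const 1).pow l₁
        exact hbase.mul (hyd r (ne_of_gt hrI.1))
      have hvne : v r ≠ 0 := by
        have h1 : (0:ℝ) < r + 1 := by linarith [hrI.1]
        have h2 := hypos r hrI
        simp only [hv]
        positivity
      have hw := hvd.inv hvne
      have hgd := Polynomial.hasDerivAt g r
      have hEq : (fun s => F (y s)) =ᶠ[nhds r] fun s => eval s g * (v s)⁻¹ := by
        filter_upwards [isOpen_Ioo.mem_nhds hrI] with x hx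
        have hx1ne : (x+1:ℝ) ≠ 0 := ne_of_gt (by linarith [hx.1])
        have hyne : y x ≠ 0 := ne_of_gt (hypos x hx)
        rw [hkey x hx]
        simp only [hF, hv]
        field_simp
      have hDzero : HasDerivAt (fun s => F (y s)) 0 r := by
        have hmulder := hgd.mul hw
        rw [hre, hg'] at hmulder
        simp only [zero_mul, mul_zero, zero_add, add_zero] at hmulder
        exact hmulder.congr_of_eventuallyEq hEq
      have := (hphi r hrI).unique hDzero
      have hneg := hphineg r hrI
      rw [this] at hneg
      exact lt_irrefl 0 hneg
  refine ⟨hl1odd, hk2odd, hk3even, ?_⟩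
  rw [Nat.odd_add] at hk2l2
  exact hk2l2.1 hk2odd
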